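/- Let N ≥ 2 and n ≥ 1. Define the switch prior on index sequences i : Fin n → Fin N by w(i) = (1/N) * ∏_{t=2}^{n} [α_t/(N-1) if i_t ≠ i_{t-1}, else (1-α_t)], with switch rate α_t = 1/t. If m(i) = #{t ∈ [2,n] : i_t ≠ i_{t-1}} is the number of switches, then -log₂ w(i) ≤ (m(i)+1) * (log₂ N + log₂ n). -/

import Mathlib

open Finset

lemma prod_one_sub_inv (n : ℕ) (hn : 1 ≤ n) :
    ∏ t ∈ Finset.Icc 2 n, (1 - 1 / (t : ℝ)) = 1 / n := by
  induction n with
  | zero => omega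
  | succ k ih =>
    rcases Nat.eq_or_lt_of_le hn with h | h
    · simp [← h]
    · have hk : 1 ≤ k := by omega
      rw [show k + 1 = k + 1 from rfl, ← Finset.insert_Icc_right_eq_Icc_add_one (by omega),
        Finset.prod_insert (by simp), ih hk]
      have hk0 : (k : ℝ) ≠ 0 := by positivity
      have : ((k : ℝ) + 1) ≠ 0 := by positivity
      field_simp
      push_cast
      ring

theorem switch_prior_bound' (N n : ℕ) (hN : 2 ≤ N) (hn : 1 ≤ n) (i : ℕ → Fin N) :
    -Real.logb 2 ((1 / (N : ℝ)) *
    ∏ t ∈ Finset.Icc 2 n,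
      (if i t = i (t - 1) then 1 - 1 / (t : ℝ) else (1 / (t : ℝ)) / ((N : ℝ) - 1))) ≤
      ((((Finset.Icc 2 n).filter fun t => i t ≠ i (t - 1)).card : ℝ) + 1) * (Real.logb 2 N + Real.logb 2 n) := by
  set m := ((Finset.Icc 2 n).filter fun t => i t ≠ i (t - 1)).card with hm
  set f : ℕ → ℝ := fun t =>
    (if i t = i (t - 1) then 1 - 1 / (t : ℝ) else (1 / (t : ℝ)) / ((N : ℝ) - 1)) with hf
  have hN0 : (0:ℝ) < N := by positivity
  have hn0 : (0:ℝ) < n := by exact_mod_cast hn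
  have hN1 : (1:ℝ) ≤ (N:ℝ) - 1 := by
    have : (2:ℝ) ≤ N := by exact_mod_cast hN
    linarith
  set c : ℝ := 1 / ((N:ℝ) * n) with hc
  have hc0 : 0 < c := by positivity
  -- bound the switch part
  have h1 : c ^ m ≤ ∏ t ∈ (Finset.Icc 2 n).filter (fun t => i t ≠ i (t - 1)), f t := by
    rw [hm, ← Finset.prod_const]
    apply Finset.prod_le_prod (fun t _ => le_of_lt hc0)
    intro t ht
    simp only [Finset.mem_filter, Finset.mem_Icc] at ht
    have ht2 : 2 ≤ t := ht.1.1
    have htn : t ≤ n := ht.1.2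
    have ht0 : (0:ℝ) < t := by positivity
    simp only [hf, if_neg ht.2]
    rw [hc, div_le_div_iff₀ (by positivity) (by positivity)]
    have h1 : (t:ℝ) ≤ n := by exact_mod_cast htn
    have hinv : 1/(n:ℝ) ≤ 1/(t:ℝ) := one_div_le_one_div_of_le ht0 h1
    have heq : (1/(n:ℝ))*((N:ℝ)*n) = N := by field_simp
    nlinarith [mul_le_mul_of_nonneg_right hinv (by positivity : (0:ℝ) ≤ (N:ℝ)*n)]
  -- bound the non-switch part
  have h2 : 1 / (n:ℝ) ≤ ∏ t ∈ (Finset.Icc 2 n).filter (fun t => ¬ i t ≠ i (t - 1)), f t := by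
    have key : ∏ t ∈ Finset.Icc 2 n, (1 - 1 / (t : ℝ)) = 1 / n := prod_one_sub_inv n hn
    rw [← key, ← Finset.prod_filter_mul_prod_filter_not (Finset.Icc 2 n)
      (fun t => ¬ i t ≠ i (t - 1)) (fun t => 1 - 1 / (t:ℝ))]
    have hg0 : ∀ t ∈ Finset.Icc 2 n, (0:ℝ) ≤ 1 - 1 / (t:ℝ) := by
      intro t ht
      simp only [Finset.mem_Icc] at ht
      have : (2:ℝ) ≤ t := by exact_mod_cast ht.1
      have : 1 / (t:ℝ) ≤ 1 := by
        rw [div_le_one (by linarith)]; linarith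
      linarith
    have hfeq : ∏ t ∈ (Finset.Icc 2 n).filter (fun t => ¬ i t ≠ i (t - 1)), f t
        = ∏ t ∈ (Finset.Icc 2 n).filter (fun t => ¬ i t ≠ i (t - 1)), (1 - 1 / (t:ℝ)) := by
      apply Finset.prod_congr rfl
      intro t ht
      simp only [Finset.mem_filter, not_not] at ht
      simp [hf, ht.2]
    rw [hfeq]
    have hle1 : ∏ t ∈ (Finset.Icc 2 n).filter (fun t => ¬¬ i t ≠ i (t - 1)), (1 - 1 / (t:ℝ)) ≤ 1 := by
      apply Finset.prod_le_one
      · intro t ht; exact hg0 t (Finset.mem_of_mem_filter t ht)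
      · intro t ht
        simp only [Finset.mem_filter, Finset.mem_Icc] at ht
        have : (0:ℝ) < t := by
          have : 2 ≤ t := ht.1.1; positivity
        have : 0 ≤ 1 / (t:ℝ) := by positivity
        linarith
    have hpos : 0 ≤ ∏ t ∈ (Finset.Icc 2 n).filter (fun t => ¬ i t ≠ i (t - 1)), (1 - 1 / (t:ℝ)) :=
      Finset.prod_nonneg fun t ht => hg0 t (Finset.mem_of_mem_filter t ht)
    have hfin := mul_le_mul_of_nonneg_left hle1 hpos
    simpa using hfin
  -- combine
  have hw : c ^ (m + 1) ≤ (1 / (N : ℝ)) * ∏ t ∈ Finset.Icc 2 n, f t := by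
    rw [← Finset.prod_filter_mul_prod_filter_not (Finset.Icc 2 n) (fun t => i t ≠ i (t - 1)) f]
    have : c ^ m * (1 / (n:ℝ)) ≤
        (∏ t ∈ (Finset.Icc 2 n).filter (fun t => i t ≠ i (t - 1)), f t) *
        ∏ t ∈ (Finset.Icc 2 n).filter (fun t => ¬ i t ≠ i (t - 1)), f t := by
      apply mul_le_mul h1 h2 (by positivity) (le_trans (by positivity) h1)
    calc c ^ (m+1) = (1/(N:ℝ)) * (c ^ m * (1/(n:ℝ))) := by
          rw [pow_succ, hc]; field_simp
      _ ≤ _ := by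
          apply mul_le_mul_of_nonneg_left this (by positivity)
  have hwpos : 0 < (1 / (N : ℝ)) * ∏ t ∈ Finset.Icc 2 n, f t :=
    lt_of_lt_of_le (pow_pos hc0 (m+1)) hw
  have hlog : Real.logb 2 (c ^ (m+1)) ≤ Real.logb 2 ((1 / (N : ℝ)) * ∏ t ∈ Finset.Icc 2 n, f t) :=
    Real.logb_le_logb_of_le one_lt_two (pow_pos hc0 (m+1)) hw
  have hcval : Real.logb 2 c = -(Real.logb 2 N + Real.logb 2 n) := by
    rw [hc, one_div, Real.logb_inv, Real.logb_mul (ne_of_gt hN0) (ne_of_gt hn0)]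
  have hcl : Real.logb 2 (c ^ (m+1)) = -(((m:ℝ)+1) * (Real.logb 2 N + Real.logb 2 n)) := by
    rw [Real.logb_pow, hcval]
    push_cast
    ring
  linarith

/-- The switch prior on index sequences `i` (positions 1..n, values in `Fin N`),
with switch rate `α_t = 1/t`:
`w(i) = (1/N) * ∏_{t=2}^{n} [ (1/t)/(N-1) if i_t ≠ i_{t-1}, else 1 - 1/t ]`. -/
noncomputable def switchPrior (N n : ℕ) (i : ℕ → Fin N) : ℝ :=
  (1 / (N : ℝ)) *
    ∏ t ∈ Finset.Icc 2 n,
      (if i t = i (t - 1) then 1 - 1 / (t : ℝ) else (1 / (t : ℝ)) / ((N : ℝ) - 1))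

/-- The number of switches `m(i) = #{t ∈ [2,n] : i_t ≠ i_{t-1}}`. -/
def numSwitches (N n : ℕ) (i : ℕ → Fin N) : ℕ :=
  ((Finset.Icc 2 n).filter fun t => i t ≠ i (t - 1)).card

/-- If `N ≥ 2`, `n ≥ 1`, then `-log₂ w(i) ≤ (m(i)+1) * (log₂ N + log₂ n)`. -/
theorem switch_prior_bound (N n : ℕ) (hN : 2 ≤ N) (hn : 1 ≤ n) (i : ℕ → Fin N) :
    -Real.logb 2 (switchPrior N n i) ≤
      ((numSwitches N n i : ℝ) + 1) * (Real.logb 2 N + Real.logb 2 n) := by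
  have := switch_prior_bound' N n hN hn i
  rw [switchPrior, numSwitches]
  exact this
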